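/- arXiv:1403.1641 — 2 statements merged into one kernel-verified Lean document; each statement's English description precedes it below -/
import Mathlib

section
/- Let G be a Lie group with a left Haar measure that is also right-invariant (unimodular), let f₁ be a smooth function on G such that f₁ and all its left-invariant derivatives decay faster than e^{-κ|g|} for every κ ≥ 0 (with respect to a left-invariant Riemannian distance |g| = d(g,e)), and let f₂ ∈ C^∞(G) be such that f₂ and all its left-invariant derivatives are of moderate growth, i.e., bounded by C e^{κ|g|} for some κ. Then for any X in the Lie algebra of G, ∫_G f₁(g) (dL(X) f₂)(g) dg = -∫_G (dL(X) f₁)(g) f₂(g) dg, where dL(X)f(g) = d/dε f(exp(-εX) g)|_{ε=0}. -/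
open MeasureTheory Filter Metric

/-- integration by parts on a unimodular group: Let `G` be a unimodular
(Lie) group with bi-invariant Haar measure `μ` and a left-invariant metric, `|g| = dist g 1`.
The left-invariant derivative along a one-parameter subgroup `φ` is
`dL f g = d/dε f(φ(-ε) g)|₀`. If `f₁` and all its left-invariant derivatives are rapidly
decreasing, and `f₂` with all its left-invariant derivatives is of moderate growth
(and both are smooth along the relevant directions), then
`∫ f₁ (dL f₂) dμ = - ∫ (dL f₁) f₂ dμ`. -/
theorem stmt3 {G : Type*} [Group G] [MetricSpace G] [IsTopologicalGroup G]
    [MeasurableSpace G] [BorelSpace G] [LocallyCompactSpace G]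
    (μ : Measure G) [μ.IsHaarMeasure] [μ.IsMulRightInvariant]
    (hleft : ∀ h g₁ g₂ : G, dist (h * g₁) (h * g₂) = dist g₁ g₂)
    (hint : ∃ c > 0, Integrable (fun g => Real.exp (-c * dist g 1)) μ)
    (φ : ℝ → G) (hφ : ∀ s t : ℝ, φ (s + t) = φ s * φ t)
    (f₁ f₂ : G → ℂ) (hf₁c : Continuous f₁) (hf₂c : Continuous f₂)
    -- smoothness of f₁, f₂ along the one-parameter subgroup:
    (hf₁d : ∀ g : G, DifferentiableAt ℝ (fun ε : ℝ => f₁ (φ (-ε) * g)) 0)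
    (hf₂d : ∀ g : G, DifferentiableAt ℝ (fun ε : ℝ => f₂ (φ (-ε) * g)) 0)
    -- rapid decay of f₁ and of all its left-invariant derivatives:
    (hf₁dec : ∀ κ : ℝ, 0 ≤ κ → ∃ C : ℝ, ∀ g : G,
      ‖f₁ g‖ ≤ C * Real.exp (-κ * dist g 1))
    (hdf₁dec : ∀ ψ : ℝ → G, (∀ s t : ℝ, ψ (s + t) = ψ s * ψ t) →
      ∀ κ : ℝ, 0 ≤ κ → ∃ C : ℝ, ∀ g : G,
        ‖deriv (fun ε : ℝ => f₁ (ψ (-ε) * g)) 0‖ ≤ C * Real.exp (-κ * dist g 1))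
    -- moderate growth of f₂ and of all its left-invariant derivatives:
    (hf₂mod : ∃ C κ : ℝ, 0 < C ∧ 0 < κ ∧ ∀ g : G,
      ‖f₂ g‖ ≤ C * Real.exp (κ * dist g 1))
    (hdf₂mod : ∀ ψ : ℝ → G, (∀ s t : ℝ, ψ (s + t) = ψ s * ψ t) →
      ∃ C κ : ℝ, 0 < C ∧ 0 < κ ∧ ∀ g : G,
        ‖deriv (fun ε : ℝ => f₂ (ψ (-ε) * g)) 0‖ ≤ C * Real.exp (κ * dist g 1)) :
    ∫ g, f₁ g * deriv (fun ε : ℝ => f₂ (φ (-ε) * g)) 0 ∂μ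
      = - ∫ g, deriv (fun ε : ℝ => f₁ (φ (-ε) * g)) 0 * f₂ g ∂μ := by
  classical
  -- basic facts about φ
  have hφ0 : φ 0 = 1 := by
    have h := hφ 0 0
    rw [add_zero] at h
    have h2 : φ 0 * φ 0 = φ 0 * 1 := by rw [mul_one, ← h]
    exact mul_left_cancel h2
  have hφinv : ∀ t : ℝ, φ (-t) = (φ t)⁻¹ := by
    intro t
    have h : φ t * φ (-t) = 1 := by rw [← hφ]; simp [hφ0]
    exact (inv_eq_of_mul_eq_one_right h).symm
  -- distance facts
  have hdistinv : ∀ h : G, dist h⁻¹ 1 = dist h 1 := by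
    intro h
    have := hleft h h⁻¹ 1
    simp only [mul_inv_cancel, mul_one] at this
    rw [← this, dist_comm]
  have hd1 : ∀ a g : G, dist (a * g) 1 ≤ dist g 1 + dist a 1 := by
    intro a g
    have h1 : dist (a * g) a = dist g 1 := by simpa using hleft a g 1
    calc dist (a * g) 1 ≤ dist (a * g) a + dist a 1 := dist_triangle _ _ _
      _ = dist g 1 + dist a 1 := by rw [h1]
  have hd2 : ∀ a g : G, dist g 1 - dist a 1 ≤ dist (a * g) 1 := by
    intro a g
    have h1 : dist (a * g) a = dist g 1 := by simpa using hleft a g 1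
    have := dist_triangle (a * g) (1 : G) a
    rw [h1] at this
    have h2 : dist (1 : G) a = dist a 1 := dist_comm _ _
    linarith [this, h2.le, h2.ge]
  have hd3 : ∀ a g : G, dist a 1 - dist g 1 ≤ dist (a * g) 1 := by
    intro a g
    have h1 : dist a (a * g) = dist 1 g := by simpa using hleft a 1 g
    have h2 := dist_triangle a (a * g) (1 : G)
    rw [h1, dist_comm (1 : G) g] at h2
    linarith
  by_cases hB : ∃ B : ℝ, ∀ ε : ℝ, |ε| ≤ 1 → dist (φ ε) 1 ≤ B
  · -- main case: φ locally bounded near 0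
    obtain ⟨B, hBd⟩ := hB
    have hB0 : (0 : ℝ) ≤ B := le_trans dist_nonneg (hBd 0 (by norm_num))
    obtain ⟨c, hc, hcint⟩ := hint
    obtain ⟨C₂, κ₂, hC₂, hκ₂, hD₂b⟩ := hdf₂mod φ hφ
    obtain ⟨C₂', κ₂', hC₂', hκ₂', hf₂b⟩ := hf₂mod
    obtain ⟨C₁, hD₁b⟩ := hdf₁dec φ hφ (κ₂' + c) (by positivity)
    obtain ⟨C₁', hf₁b'⟩ := hf₁dec (κ₂' + c) (by positivity)
    obtain ⟨C₁'', hf₁b''⟩ := hf₁dec (κ₂ + c) (by positivity)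
    have hC₁ : (0 : ℝ) ≤ C₁ := by
      have h := hD₁b 1
      rw [dist_self, mul_zero, Real.exp_zero, mul_one] at h
      exact le_trans (norm_nonneg _) h
    have hC₁' : (0 : ℝ) ≤ C₁' := by
      have h := hf₁b' 1
      rw [dist_self, mul_zero, Real.exp_zero, mul_one] at h
      exact le_trans (norm_nonneg _) h
    have hC₁'' : (0 : ℝ) ≤ C₁'' := by
      have h := hf₁b'' 1
      rw [dist_self, mul_zero, Real.exp_zero, mul_one] at h
      exact le_trans (norm_nonneg _) h
    -- key derivative lemma
    have key : ∀ (f : G → ℂ), (∀ g, DifferentiableAt ℝ (fun ε : ℝ => f (φ (-ε) * g)) 0) →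
        ∀ (x₀ : ℝ) (g : G), HasDerivAt (fun x : ℝ => f (φ (-x) * g))
          (deriv (fun δ : ℝ => f (φ (-δ) * (φ (-x₀) * g))) 0) x₀ := by
      intro f hd x₀ g
      have h2 : HasDerivAt (fun ε : ℝ => f (φ (-ε) * (φ (-x₀) * g)))
          (deriv (fun δ : ℝ => f (φ (-δ) * (φ (-x₀) * g))) 0) (x₀ - x₀) := by
        rw [sub_self]; exact (hd (φ (-x₀) * g)).hasDerivAt
      have h3 := h2.comp_sub_const x₀ x₀
      have hfun : (fun x : ℝ => f (φ (-(x - x₀)) * (φ (-x₀) * g)))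
          = fun x : ℝ => f (φ (-x) * g) := by
        funext x
        rw [← mul_assoc, ← hφ]
        ring_nf
      rwa [hfun] at h3
    have keyneg : ∀ (f : G → ℂ), (∀ g, DifferentiableAt ℝ (fun ε : ℝ => f (φ (-ε) * g)) 0) →
        ∀ (x₀ : ℝ) (g : G), HasDerivAt (fun x : ℝ => f (φ x * g))
          (-(deriv (fun δ : ℝ => f (φ (-δ) * (φ x₀ * g))) 0)) x₀ := by
      intro f hd x₀ g
      have h2 : HasDerivAt (fun δ : ℝ => f (φ (-δ) * (φ x₀ * g)))
          (deriv (fun δ : ℝ => f (φ (-δ) * (φ x₀ * g))) 0) (x₀ - x₀) := by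
        rw [sub_self]; exact (hd (φ x₀ * g)).hasDerivAt
      have h3 := h2.comp_const_sub x₀ x₀
      have hfun : (fun x : ℝ => f (φ (-(x₀ - x)) * (φ x₀ * g)))
          = fun x : ℝ => f (φ x * g) := by
        funext x
        rw [← mul_assoc, ← hφ]
        ring_nf
      rwa [hfun] at h3
    -- measurability of the derivative functions
    have measD : ∀ (f : G → ℂ), Continuous f →
        (∀ g, DifferentiableAt ℝ (fun ε : ℝ => f (φ (-ε) * g)) 0) →
        AEStronglyMeasurable (fun g => deriv (fun δ : ℝ => f (φ (-δ) * g)) 0) μ := by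
      intro f hc hd
      have hQc : ∀ n : ℕ, AEStronglyMeasurable
          (fun g => ((1:ℝ)/(n+1))⁻¹ • (f (φ (-(1/(n+1))) * g) - f g)) μ := by
        intro n
        exact (((hc.comp (continuous_mul_left _)).sub hc).const_smul ((1:ℝ)/(n+1))⁻¹).aestronglyMeasurable
      refine aestronglyMeasurable_of_tendsto_ae atTop hQc (ae_of_all _ fun g => ?_)
      have h1 : Tendsto (slope (fun δ : ℝ => f (φ (-δ) * g)) 0) (nhdsWithin 0 {(0:ℝ)}ᶜ)
          (nhds (deriv (fun δ : ℝ => f (φ (-δ) * g)) 0)) :=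
        hasDerivAt_iff_tendsto_slope.mp (hd g).hasDerivAt
      have h2 : Tendsto (fun n : ℕ => (1:ℝ)/(n+1)) atTop (nhdsWithin 0 {(0:ℝ)}ᶜ) := by
        refine tendsto_nhdsWithin_of_tendsto_nhds_of_eventually_within _
          tendsto_one_div_add_atTop_nhds_zero_nat
          (Eventually.of_forall fun n => ?_)
        have : (0:ℝ) < 1/(n+1) := by positivity
        exact Set.mem_compl_singleton_iff.mpr (ne_of_gt this)
      refine Tendsto.congr (fun n => ?_) (h1.comp h2)
      simp [slope, hφ0]
    have mD₁ := measD f₁ hf₁c hf₁d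
    have mD₂ := measD f₂ hf₂c hf₂d
    -- integrability of f₁ * f₂
    have hprod : Integrable (fun g => f₁ g * f₂ g) μ := by
      refine Integrable.mono' (hcint.const_mul (C₁' * C₂'))
        (hf₁c.mul hf₂c).aestronglyMeasurable (ae_of_all _ fun g => ?_)
      rw [norm_mul]
      calc ‖f₁ g‖ * ‖f₂ g‖
          ≤ (C₁' * Real.exp (-(κ₂' + c) * dist g 1)) * (C₂' * Real.exp (κ₂' * dist g 1)) :=
            mul_le_mul (hf₁b' g) (hf₂b g) (norm_nonneg _)
              (le_trans (norm_nonneg _) (hf₁b' g))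
        _ = C₁' * C₂' * Real.exp (-c * dist g 1) := by
            rw [mul_mul_mul_comm, ← Real.exp_add]; congr 1; ring
    -- the J side (translation on f₂)
    have hJ := hasDerivAt_integral_of_dominated_loc_of_deriv_le (μ := μ) (x₀ := (0:ℝ))
      (F := fun x g => f₁ g * f₂ (φ (-x) * g))
      (F' := fun x g => f₁ g * deriv (fun δ : ℝ => f₂ (φ (-δ) * (φ (-x) * g))) 0)
      (bound := fun g => (C₁'' * C₂ * Real.exp (κ₂ * B)) * Real.exp (-c * dist g 1))
      (ball_mem_nhds (0:ℝ) zero_lt_one)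
      (Eventually.of_forall fun x =>
        (hf₁c.mul (hf₂c.comp (continuous_mul_left _))).aestronglyMeasurable)
      (by simpa [hφ0] using hprod)
      (by
        show AEStronglyMeasurable
          (fun g => f₁ g * deriv (fun δ : ℝ => f₂ (φ (-δ) * (φ (-(0:ℝ)) * g))) 0) μ
        have : (fun g => f₁ g * deriv (fun δ : ℝ => f₂ (φ (-δ) * (φ (-(0:ℝ)) * g))) 0)
            = fun g => f₁ g * deriv (fun δ : ℝ => f₂ (φ (-δ) * g)) 0 := by
          funext g; simp [hφ0]
        rw [this]
        exact hf₁c.aestronglyMeasurable.mul mD₂)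
      (ae_of_all _ fun g => by
        intro x hx
        have hx1 : |(-x : ℝ)| ≤ 1 := by
          rw [abs_neg]
          have := mem_ball_iff_norm.mp hx
          simpa [Real.norm_eq_abs] using this.le
        rw [norm_mul]
        have hdh : dist (φ (-x) * g) 1 ≤ dist g 1 + B :=
          le_trans (hd1 _ _) (by linarith [hBd (-x) hx1])
        calc ‖f₁ g‖ * ‖deriv (fun δ : ℝ => f₂ (φ (-δ) * (φ (-x) * g))) 0‖
            ≤ (C₁'' * Real.exp (-(κ₂ + c) * dist g 1)) * (C₂ * Real.exp (κ₂ * (dist g 1 + B))) := by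
              refine mul_le_mul (hf₁b'' g) ?_ (norm_nonneg _)
                (le_trans (norm_nonneg _) (hf₁b'' g))
              refine le_trans (hD₂b (φ (-x) * g)) ?_
              have := Real.exp_le_exp.mpr (mul_le_mul_of_nonneg_left hdh hκ₂.le)
              exact mul_le_mul_of_nonneg_left this hC₂.le
          _ = (C₁'' * C₂ * Real.exp (κ₂ * B)) * Real.exp (-c * dist g 1) := by
              rw [mul_mul_mul_comm, ← Real.exp_add, mul_assoc (C₁'' * C₂), ← Real.exp_add]
              congr 1; ring)
      (hcint.const_mul _)
      (ae_of_all _ fun g x _ => (key f₂ hf₂d x g).const_mul (f₁ g))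
    obtain ⟨-, hJder⟩ := hJ
    have hJval : (∫ g, f₁ g * deriv (fun δ : ℝ => f₂ (φ (-δ) * (φ (-(0:ℝ)) * g))) 0 ∂μ)
        = ∫ g, f₁ g * deriv (fun δ : ℝ => f₂ (φ (-δ) * g)) 0 ∂μ := by
      simp [hφ0]
    rw [hJval] at hJder
    -- the I side (translation on f₁)
    have hI := hasDerivAt_integral_of_dominated_loc_of_deriv_le (μ := μ) (x₀ := (0:ℝ))
      (F := fun x g => f₁ (φ x * g) * f₂ g)
      (F' := fun x g => (-(deriv (fun δ : ℝ => f₁ (φ (-δ) * (φ x * g))) 0)) * f₂ g)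
      (bound := fun g => (C₁ * C₂' * Real.exp ((κ₂' + c) * B)) * Real.exp (-c * dist g 1))
      (ball_mem_nhds (0:ℝ) zero_lt_one)
      (Eventually.of_forall fun x =>
        ((hf₁c.comp (continuous_mul_left _)).mul hf₂c).aestronglyMeasurable)
      (by simpa [hφ0] using hprod)
      (by
        show AEStronglyMeasurable
          (fun g => (-(deriv (fun δ : ℝ => f₁ (φ (-δ) * (φ (0:ℝ) * g))) 0)) * f₂ g) μ
        have : (fun g => (-(deriv (fun δ : ℝ => f₁ (φ (-δ) * (φ (0:ℝ) * g))) 0)) * f₂ g)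
            = fun g => (-(deriv (fun δ : ℝ => f₁ (φ (-δ) * g)) 0)) * f₂ g := by
          funext g; simp [hφ0]
        rw [this]
        exact (mD₁.neg.mul hf₂c.aestronglyMeasurable))
      (ae_of_all _ fun g => by
        intro x hx
        have hx1 : |x| ≤ 1 := by
          have := mem_ball_iff_norm.mp hx
          simpa [Real.norm_eq_abs] using this.le
        rw [norm_mul, norm_neg]
        have hdh : dist g 1 - B ≤ dist (φ x * g) 1 :=
          le_trans (by linarith [hBd x hx1]) (hd2 (φ x) g)
        have hexp : Real.exp (-(κ₂' + c) * dist (φ x * g) 1)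
            ≤ Real.exp (-(κ₂' + c) * (dist g 1 - B)) := by
          apply Real.exp_le_exp.mpr
          have hk : (0:ℝ) < κ₂' + c := by positivity
          nlinarith
        calc ‖deriv (fun δ : ℝ => f₁ (φ (-δ) * (φ x * g))) 0‖ * ‖f₂ g‖
            ≤ (C₁ * Real.exp (-(κ₂' + c) * (dist g 1 - B))) * (C₂' * Real.exp (κ₂' * dist g 1)) := by
              refine mul_le_mul ?_ (hf₂b g) (norm_nonneg _) (by positivity)
              refine le_trans (hD₁b (φ x * g)) ?_
              exact mul_le_mul_of_nonneg_left hexp hC₁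
          _ = (C₁ * C₂' * Real.exp ((κ₂' + c) * B)) * Real.exp (-c * dist g 1) := by
              rw [mul_mul_mul_comm, ← Real.exp_add, mul_assoc (C₁ * C₂'), ← Real.exp_add]
              congr 1; ring)
      (hcint.const_mul _)
      (ae_of_all _ fun g x _ => (keyneg f₁ hf₁d x g).mul_const (f₂ g))
    obtain ⟨-, hIder⟩ := hI
    have hIval : (∫ g, (-(deriv (fun δ : ℝ => f₁ (φ (-δ) * (φ (0:ℝ) * g))) 0)) * f₂ g ∂μ)
        = - ∫ g, deriv (fun δ : ℝ => f₁ (φ (-δ) * g)) 0 * f₂ g ∂μ := by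
      rw [← integral_neg]
      congr 1; funext g; simp [hφ0]
    rw [hIval] at hIder
    -- the two integrals agree as functions of x by left invariance
    have hfun : (fun x : ℝ => ∫ g, f₁ g * f₂ (φ (-x) * g) ∂μ)
        = fun x : ℝ => ∫ g, f₁ (φ x * g) * f₂ g ∂μ := by
      funext x
      have h := integral_mul_left_eq_self (μ := μ) (fun g => f₁ g * f₂ (φ (-x) * g)) (φ x)
      rw [← h]
      congr 1; funext g
      have : φ (-x) * (φ x * g) = g := by
        rw [← mul_assoc, ← hφ]
        simp [hφ0]
      rw [this]
    rw [hfun] at hJder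
    exact hJder.unique hIder
  · -- degenerate case: φ unbounded near 0 forces f₁ = 0
    push_neg at hB
    have hpow : ∀ (n : ℕ) (t : ℝ), φ (n * t) = (φ t) ^ n := by
      intro n t
      induction n with
      | zero => simp [hφ0]
      | succ n ih =>
        have : ((n:ℝ) + 1) * t = n * t + t := by ring
        push_cast
        rw [this, hφ, ih, pow_succ]
    have hpowdist : ∀ (h : G) (n : ℕ), dist (h ^ n) 1 ≤ n * dist h 1 := by
      intro h n
      induction n with
      | zero => simp
      | succ n ih =>
        have h1 : dist (h ^ n * h) (h ^ n) = dist h 1 := by simpa using hleft (h ^ n) h 1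
        calc dist (h ^ (n + 1)) 1 = dist (h ^ n * h) 1 := by rw [pow_succ]
          _ ≤ dist (h ^ n * h) (h ^ n) + dist (h ^ n) 1 := dist_triangle _ _ _
          _ = dist h 1 + dist (h ^ n) 1 := by rw [h1]
          _ ≤ dist h 1 + n * dist h 1 := by linarith
          _ = (n + 1 : ℕ) * dist h 1 := by push_cast; ring
    have hf₁0 : ∀ g : G, f₁ g = 0 := by
      intro g
      obtain ⟨C, hC⟩ := hf₁dec 1 zero_le_one
      -- choose the bad points
      have hchoice : ∀ n : ℕ, ∃ t : ℝ, |t| ≤ 1 / (n + 1) ∧ ((n : ℝ) + 1) < dist (φ t) 1 := by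
        intro n
        obtain ⟨ε, hε1, hεd⟩ := hB (((n : ℝ) + 1) ^ 2)
        have hpos : (0:ℝ) < (n:ℝ) + 1 := by positivity
        refine ⟨ε / ((n:ℝ) + 1), ?_, ?_⟩
        · rw [abs_div, abs_of_pos hpos]
          gcongr
        · have h := hpow (n + 1) (ε / ((n:ℝ) + 1))
          have he : ((n + 1 : ℕ) : ℝ) * (ε / ((n:ℝ) + 1)) = ε := by
            push_cast; field_simp
          rw [he] at h
          have hdd := hpowdist (φ (ε / ((n:ℝ) + 1))) (n + 1)
          rw [← h] at hdd
          push_cast at hdd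
          nlinarith [dist_nonneg (x := φ (ε / ((n:ℝ) + 1))) (y := (1:G))]
      choose t ht1 ht2 using hchoice
      have htend : Tendsto t atTop (nhds (0:ℝ)) := by
        refine squeeze_zero_norm (a := fun n : ℕ => 1 / ((n:ℝ) + 1))
          (fun n => by simpa [Real.norm_eq_abs] using ht1 n) ?_
        exact tendsto_one_div_add_atTop_nhds_zero_nat
      have hcont : ContinuousAt (fun ε : ℝ => f₁ (φ (-ε) * g)) 0 :=
        (hf₁d g).continuousAt
      have hlim1 : Tendsto (fun n => f₁ (φ (-(t n)) * g)) atTop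
          (nhds (f₁ (φ (-(0:ℝ)) * g))) := hcont.tendsto.comp htend
      have hC0 : (0:ℝ) ≤ C := by
        have h := hC 1
        rw [dist_self, mul_zero, Real.exp_zero, mul_one] at h
        exact le_trans (norm_nonneg _) h
      have hlim2 : Tendsto (fun n => f₁ (φ (-(t n)) * g)) atTop (nhds (0:ℂ)) := by
        refine squeeze_zero_norm (a := fun n : ℕ =>
          C * Real.exp (dist g 1) * Real.exp (-((n:ℝ) + 1))) (fun n => ?_) ?_
        · have hnd : dist (φ (-(t n))) 1 = dist (φ (t n)) 1 := by
            rw [hφinv, hdistinv]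
          have hdl : ((n:ℝ) + 1) - dist g 1 ≤ dist (φ (-(t n)) * g) 1 := by
            have h3 := hd3 (φ (-(t n))) g
            rw [hnd] at h3
            linarith [ht2 n]
          calc ‖f₁ (φ (-(t n)) * g)‖
              ≤ C * Real.exp (-1 * dist (φ (-(t n)) * g) 1) := hC _
            _ ≤ C * Real.exp (-1 * (((n:ℝ) + 1) - dist g 1)) := by
                refine mul_le_mul_of_nonneg_left ?_ hC0
                apply Real.exp_le_exp.mpr; linarith
            _ = C * Real.exp (dist g 1) * Real.exp (-((n:ℝ) + 1)) := by
                rw [mul_assoc, ← Real.exp_add]; congr 1; ring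
        · have h1 : Tendsto (fun n : ℕ => -((n:ℝ) + 1)) atTop atBot := by
            rw [tendsto_neg_atBot_iff]
            exact tendsto_atTop_add_const_right _ 1 tendsto_natCast_atTop_atTop
          have h2 := Real.tendsto_exp_atBot.comp h1
          have h3 := h2.const_mul (C * Real.exp (dist g 1))
          simpa using h3
      have := tendsto_nhds_unique hlim1 hlim2
      rw [show φ (-(0:ℝ)) * g = g by simp [hφ0]] at this
      exact this
    have hL : ∀ g : G, (fun ε : ℝ => f₁ (φ (-ε) * g)) = fun _ => (0:ℂ) :=
      fun g => funext fun ε => hf₁0 _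
    calc ∫ g, f₁ g * deriv (fun ε : ℝ => f₂ (φ (-ε) * g)) 0 ∂μ
        = ∫ g, (0:ℂ) ∂μ := by
          congr 1; funext g; rw [hf₁0 g, zero_mul]
      _ = - ∫ g, deriv (fun ε : ℝ => f₁ (φ (-ε) * g)) 0 * f₂ g ∂μ := by
          rw [integral_zero]
          rw [show (fun g => deriv (fun ε : ℝ => f₁ (φ (-ε) * g)) 0 * f₂ g) = fun _ => (0:ℂ) from
            funext fun g => by rw [hL g, deriv_const, zero_mul]]
          simp
end

section
/- Let a Lie group G act smoothly on a compact smooth manifold X, and write Φ_g(x) = g⁻¹ · x. Then the set G(X) = {g ∈ G : Φ_g is transversal} (all fixed points of Φ_g are simple) is open in G. -/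
open Set Function Filter Topology Manifold

/-- For a smooth action of a Lie group `G` on a compact manifold `X`
(with `Φ_g(x) = g⁻¹ • x`), the set of transversally acting elements
`G(X) = {g : all fixed points of Φ_g are simple}` is open in `G`. -/
theorem stmt9 {E : Type*} [NormedAddCommGroup E] [NormedSpace ℝ E]
    {H : Type*} [TopologicalSpace H] (I : ModelWithCorners ℝ E H)
    {F : Type*} [NormedAddCommGroup F] [NormedSpace ℝ F]
    {H' : Type*} [TopologicalSpace H'] (J : ModelWithCorners ℝ F H')
    {G : Type*} [TopologicalSpace G] [ChartedSpace H G] [Group G] [LieGroup I (⊤ : ℕ∞) G]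
    {X : Type*} [TopologicalSpace X] [ChartedSpace H' X] [IsManifold J (⊤ : ℕ∞) X]
    [CompactSpace X] [T2Space X]
    [MulAction G X]
    (hsmooth : ContMDiff (I.prod J) J (⊤ : ℕ∞) (fun p : G × X => p.1⁻¹ • p.2)) :
    IsOpen {g : G | ∀ x : X, g⁻¹ • x = x →
      ∃ A : F →L[ℝ] F, HasMFDerivAt J J (fun y : X => g⁻¹ • y) x A ∧
        IsUnit ((1 : F →L[ℝ] F) - A)} := by
  classical
  rcases isEmpty_or_nonempty X with hX | hX
  · have : {g : G | ∀ x : X, g⁻¹ • x = x →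
        ∃ A : F →L[ℝ] F, HasMFDerivAt J J (fun y : X => g⁻¹ • y) x A ∧
          IsUnit ((1 : F →L[ℝ] F) - A)} = Set.univ := by
      ext g
      simp only [Set.mem_setOf_eq, Set.mem_univ, iff_true]
      exact fun x => hX.elim x
    rw [this]; exact isOpen_univ
  · obtain ⟨x⟩ := hX
    haveI : Inhabited X := ⟨x⟩
    haveI : FiniteDimensional ℝ F :=
      FiniteDimensional.of_locallyCompact_manifold (M := X) J
    -- smoothness of each `Φ g`
    have hsm : ∀ g : G, ContMDiff J J (⊤ : ℕ∞) (fun y : X => g⁻¹ • y) := fun g =>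
      hsmooth.comp (contMDiff_const.prodMk contMDiff_id)
    have hmd : ∀ (g : G) (x : X), MDifferentiableAt J J (fun y : X => g⁻¹ • y) x :=
      fun g x => ((hsm g) x).mdifferentiableAt (by simp)
    set D : G × X → F →L[ℝ] F :=
      fun p => mfderiv J J (fun y : X => p.1⁻¹ • y) p.2 with hDdef
    -- rewrite the set using uniqueness of the manifold derivative
    have hset : {g : G | ∀ x : X, g⁻¹ • x = x →
        ∃ A : F →L[ℝ] F, HasMFDerivAt J J (fun y : X => g⁻¹ • y) x A ∧
          IsUnit ((1 : F →L[ℝ] F) - A)}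
        = {g : G | ∀ x : X, g⁻¹ • x = x → IsUnit ((1 : F →L[ℝ] F) - D (g, x))} := by
      ext g
      simp only [Set.mem_setOf_eq]
      refine forall_congr' fun x => imp_congr_right fun _ => ⟨?_, ?_⟩
      · rintro ⟨A, hA, hU⟩
        have : D (g, x) = A := hA.mfderiv
        rwa [this]
      · intro hU
        exact ⟨D (g, x), (hmd g x).hasMFDerivAt, hU⟩
    rw [hset]
    -- the bad set, in `G × X`
    set T : Set (G × X) :=
      {p : G × X | p.1⁻¹ • p.2 = p.2 ∧ ¬ IsUnit ((1 : F →L[ℝ] F) - D p)} with hTdef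
    have hTclosed : IsClosed T := by
      rw [← isOpen_compl_iff, isOpen_iff_mem_nhds]
      rintro ⟨g₀, x₀⟩ hq
      by_cases hfix : g₀⁻¹ • x₀ = x₀
      · -- fixed point; then the derivative condition holds at `(g₀, x₀)`
        have hU : IsUnit ((1 : F →L[ℝ] F) - D (g₀, x₀)) := by
          by_contra h; exact hq ⟨hfix, h⟩
        -- continuity of the derivative in tangent coordinates
        set Dt : G × X → F →L[ℝ] F :=
          inTangentCoordinates J J (fun p : G × X => p.2) (fun p : G × X => p.1⁻¹ • p.2)
            (fun p : G × X => (mfderiv J J (fun y : X => p.1⁻¹ • y) p.2 : F →L[ℝ] F)) (g₀, x₀) with hDt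
        have hderiv : ContMDiffAt (I.prod J) 𝓘(ℝ, F →L[ℝ] F) 0 Dt (g₀, x₀) := by
          have hf : ContMDiff ((I.prod J).prod J) J (⊤ : ℕ∞)
              (fun q : (G × X) × X => q.1.1⁻¹ • q.2) :=
            hsmooth.comp ((contMDiff_fst.comp contMDiff_fst).prodMk contMDiff_snd)
          exact ContMDiffAt.mfderiv (fun (p : G × X) (y : X) => p.1⁻¹ • y)
            (fun p : G × X => p.2) hf.contMDiffAt contMDiffAt_snd (by simp)
        have hcontDt : ContinuousAt Dt (g₀, x₀) := hderiv.continuousAt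
        -- auxiliary facts about coordinate changes
        have hbase : ∀ z : X, (tangentBundleCore J X).baseSet (achart H' z)
            = (chartAt H' z).source := fun _ => rfl
        have hself : ∀ (z : X) (v : F),
            (tangentBundleCore J X).coordChange (achart H' z) (achart H' z) z v = v :=
          fun z v => (tangentBundleCore J X).coordChange_self (achart H' z) z
            (mem_chart_source H' z) v
        -- value of `Dt` at the base point
        have hDt0 : Dt (g₀, x₀) = D (g₀, x₀) := by
          rw [hDt]; erw [inTangentCoordinates_eq]
          · ext v
            simp only [ContinuousLinearMap.comp_apply]
            rw [hfix]
            rw [hself]; erw [ContinuousLinearMap.comp_apply, hself]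
          · exact mem_chart_source H' x₀
          · exact mem_chart_source H' _
        have hU' : IsUnit ((1 : F →L[ℝ] F) - Dt (g₀, x₀)) := by rwa [hDt0]
        -- the neighborhood
        have h1 : {p : G × X | IsUnit ((1 : F →L[ℝ] F) - Dt p)} ∈ 𝓝 (g₀, x₀) := by
          have hcont : ContinuousAt (fun p : G × X => (1 : F →L[ℝ] F) - Dt p) (g₀, x₀) :=
            continuousAt_const.sub hcontDt
          exact hcont.preimage_mem_nhds (Units.isOpen.mem_nhds hU')
        have h2 : {p : G × X | p.2 ∈ (chartAt H' x₀).source} ∈ 𝓝 (g₀, x₀) :=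
          ((chartAt H' x₀).open_source.preimage continuous_snd).mem_nhds
            (mem_chart_source H' x₀)
        have h3 : {p : G × X | p.1⁻¹ • p.2 ∈ (chartAt H' x₀).source} ∈ 𝓝 (g₀, x₀) := by
          refine ((chartAt H' x₀).open_source.preimage hsmooth.continuous).mem_nhds ?_
          show g₀⁻¹ • x₀ ∈ (chartAt H' x₀).source
          rw [hfix]; exact mem_chart_source H' x₀
        filter_upwards [h1, h2, h3] with p hp1 hp2 hp3
        rintro ⟨hpfix, hpnu⟩
        apply hpnu
        -- coordinate change conjugation
        obtain ⟨g, x⟩ := p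
        simp only at hp1 hp2 hp3 hpfix
        have hx0 : x ∈ (chartAt H' x₀).source := hp2
        have hDt_eq : Dt (g, x) =
            ((tangentBundleCore J X).coordChange (achart H' (g⁻¹ • x))
                (achart H' (g₀⁻¹ • x₀)) (g⁻¹ • x)) ∘L
              D (g, x) ∘L
            ((tangentBundleCore J X).coordChange (achart H' x₀) (achart H' x) x) := by
          rw [hDt]; erw [inTangentCoordinates_eq]
          · exact hx0
          · show g⁻¹ • x ∈ (chartAt H' (g₀⁻¹ • x₀)).source
            rw [hpfix, hfix]; exact hx0
        rw [hpfix, hfix] at hDt_eq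
        set C₁ : F →L[ℝ] F :=
          (tangentBundleCore J X).coordChange (achart H' x) (achart H' x₀) x with hC₁
        set C₂ : F →L[ℝ] F :=
          (tangentBundleCore J X).coordChange (achart H' x₀) (achart H' x) x with hC₂
        have h12 : C₁ * C₂ = 1 := by
          ext v
          have := (tangentBundleCore J X).coordChange_comp (achart H' x₀) (achart H' x)
            (achart H' x₀) x ⟨⟨hx0, mem_chart_source H' x⟩, hx0⟩ v
          simpa [hC₁, hC₂, hself x₀ v] using this.trans
            ((tangentBundleCore J X).coordChange_self (achart H' x₀) x hx0 v)
        have h21 : C₂ * C₁ = 1 := by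
          ext v
          have := (tangentBundleCore J X).coordChange_comp (achart H' x) (achart H' x₀)
            (achart H' x) x ⟨⟨mem_chart_source H' x, hx0⟩, mem_chart_source H' x⟩ v
          simpa [hC₁, hC₂] using this.trans (hself x v)
        have hconj : (1 : F →L[ℝ] F) - Dt (g, x)
            = C₁ * ((1 : F →L[ℝ] F) - D (g, x)) * C₂ := by
          rw [mul_sub, sub_mul, mul_one, h12, hDt_eq]
          rfl
        have u1 : IsUnit C₁ := ⟨⟨C₁, C₂, h12, h21⟩, rfl⟩
        have u2 : IsUnit C₂ := ⟨⟨C₂, C₁, h21, h12⟩, rfl⟩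
        have key2 : (1 : F →L[ℝ] F) - D (g, x)
            = C₂ * ((1 : F →L[ℝ] F) - Dt (g, x)) * C₁ := by
          rw [hconj]
          have e : C₂ * (C₁ * ((1 : F →L[ℝ] F) - D (g, x)) * C₂) * C₁
              = (C₂ * C₁) * ((1 : F →L[ℝ] F) - D (g, x)) * (C₂ * C₁) := by
            noncomm_ring
          rw [e, h21, one_mul, mul_one]
        rw [key2]
        exact (u2.mul hp1).mul u1
      · -- not a fixed point: use continuity of the action and Hausdorffness
        have hcont : Continuous fun p : G × X => ((p.1⁻¹ • p.2 : X), p.2) :=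
          hsmooth.continuous.prodMk continuous_snd
        have hopen : IsOpen {p : G × X | p.1⁻¹ • p.2 ≠ p.2} :=
          (isOpen_compl_iff.mpr isClosed_diagonal).preimage hcont
        filter_upwards [hopen.mem_nhds hfix] with p hp hpT
        exact hp hpT.1
    -- project along the compact fiber
    have himage : IsClosed (Prod.fst '' T) := isClosedMap_fst_of_compactSpace T hTclosed
    have hSeq : {g : G | ∀ x : X, g⁻¹ • x = x → IsUnit ((1 : F →L[ℝ] F) - D (g, x))}
        = (Prod.fst '' T)ᶜ := by
      ext g
      simp only [Set.mem_setOf_eq, Set.mem_compl_iff, Set.mem_image, Prod.exists, hTdef,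
        not_exists]
      constructor
      · rintro h g' x ⟨⟨hfix, hnu⟩, rfl⟩
        exact hnu (h x hfix)
      · intro h x hfix
        by_contra hnu
        exact h g x ⟨⟨hfix, hnu⟩, rfl⟩
    rw [hSeq]
    exact himage.isOpen_compl
end
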